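/- arXiv:0909.4717 — 2 statements merged into one kernel-verified Lean document; each statement's English description precedes it below -/
import Mathlib

section
/- Let G be a simple graph on [n]. Then J_G = ∩_{S ⊆ [n]} P_S(G), i.e., the binomial edge ideal equals the intersection over all subsets S of [n] of the prime ideals P_S(G). -/
open MvPolynomial

/-- The binomial `f_{ab} = x_a y_b - x_b y_a` in `K[x_1,…,x_n,y_1,…,y_n]`. -/
noncomputable def edgeBinomial (K : Type*) [Field K] {n : ℕ} (a b : Fin n) :
    MvPolynomial (Fin n ⊕ Fin n) K :=
  X (Sum.inl a) * X (Sum.inr b) - X (Sum.inl b) * X (Sum.inr a)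

/-- The binomial edge ideal `J_G` of a simple graph `G` on `[n]`. -/
noncomputable def binomialEdgeIdeal (K : Type*) [Field K] {n : ℕ}
    (G : SimpleGraph (Fin n)) : Ideal (MvPolynomial (Fin n ⊕ Fin n) K) :=
  Ideal.span {p | ∃ i j : Fin n, G.Adj i j ∧ i < j ∧ p = edgeBinomial K i j}

/-- The prime ideal `P_S(G)`. -/
noncomputable def componentPrime (K : Type*) [Field K] {n : ℕ}
    (G : SimpleGraph (Fin n)) (S : Set (Fin n)) :
    Ideal (MvPolynomial (Fin n ⊕ Fin n) K) :=
  Ideal.span ({p | ∃ i ∈ S, p = X (Sum.inl i) ∨ p = X (Sum.inr i)} ∪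
    {p | ∃ a b : (Sᶜ : Set (Fin n)), (G.induce Sᶜ).Reachable a b ∧
      p = edgeBinomial K a.1 b.1})

namespace BEIAux

variable {K : Type*} [Field K] {n : ℕ}

/-- The vertex-multigrading weight: both `x_i` and `y_i` have weight `e_i ∈ ℕ^n`. -/
def wt (n : ℕ) : Fin n ⊕ Fin n → (Fin n → ℕ) :=
  Sum.elim (fun i => Pi.single i 1) (fun i => Pi.single i 1)

lemma weight_wt_apply (d : (Fin n ⊕ Fin n) →₀ ℕ) (i : Fin n) :
    Finsupp.weight (wt n) d i = d (Sum.inl i) + d (Sum.inr i) := by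
  induction d using Finsupp.induction with
  | zero => simp
  | single_add j c rest hj hc ih =>
    rw [map_add]
    have hs : Finsupp.weight (wt n) (Finsupp.single j c) = c • wt n j := by
      rw [Finsupp.weight_apply, Finsupp.sum_single_index]; simp
    rw [hs]
    have : (c • wt n j + Finsupp.weight (wt n) rest) i
        = c * wt n j i + Finsupp.weight (wt n) rest i := by
      simp [Pi.add_apply, Pi.smul_apply]
    rw [this, ih]
    rcases j with k | k <;> by_cases hk : k = i
    · subst hk; simp [wt, Finsupp.single_apply, Pi.single_apply]; ring
    · simp [wt, Finsupp.single_apply, Pi.single_apply, hk, Ne.symm hk]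
    · subst hk; simp [wt, Finsupp.single_apply, Pi.single_apply]; ring
    · simp [wt, Finsupp.single_apply, Pi.single_apply, hk, Ne.symm hk]

lemma edgeBinomial_self (a : Fin n) : edgeBinomial K a a = 0 := by
  simp [edgeBinomial, mul_comm]

lemma edgeBinomial_swap (a b : Fin n) : edgeBinomial K b a = - edgeBinomial K a b := by
  simp only [edgeBinomial]; ring

lemma adj_mem {G : SimpleGraph (Fin n)} {a b : Fin n} (h : G.Adj a b) :
    edgeBinomial K a b ∈ binomialEdgeIdeal K G := by
  rcases lt_or_gt_of_ne h.ne with hlt | hgt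
  · exact Ideal.subset_span ⟨a, b, h, hlt, rfl⟩
  · rw [← neg_neg (edgeBinomial K a b), ← edgeBinomial_swap]
    exact neg_mem (Ideal.subset_span ⟨b, a, h.symm, hgt, rfl⟩)

lemma key_id {f : Fin n → Fin n ⊕ Fin n} (hf : f = Sum.inl ∨ f = Sum.inr)
    (a b d : Fin n) :
    X (f d) * edgeBinomial K a b
      = X (f a) * edgeBinomial K d b + X (f b) * edgeBinomial K a d := by
  rcases hf with rfl | rfl <;> simp only [edgeBinomial] <;> ring

/-- Key walk lemma: a monomial supported on the interior of a path times the
end-to-end binomial lies in `J_G`. -/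
lemma walk_mem {G : SimpleGraph (Fin n)} :
    ∀ {a b : Fin n} (wk : G.Walk a b), wk.IsPath →
      ∀ v : (Fin n ⊕ Fin n) →₀ ℕ,
        (∀ c ∈ wk.support, c ≠ a → c ≠ b → v (Sum.inl c) + v (Sum.inr c) ≠ 0) →
        monomial v (1 : K) * edgeBinomial K a b ∈ binomialEdgeIdeal K G := by
  intro a b wk
  induction wk with
  | nil =>
    intro _ v _
    simp [edgeBinomial_self]
  | @cons a d b h w' ih =>
    intro hp v hv
    rcases w' with _ | ⟨h2, w''⟩
    · exact Ideal.mul_mem_left _ _ (adj_mem h)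
    · rw [SimpleGraph.Walk.cons_isPath_iff] at hp
      obtain ⟨hp', hanotin⟩ := hp
      have hdb : d ≠ b := by
        rw [SimpleGraph.Walk.cons_isPath_iff] at hp'
        intro hdbeq
        exact hp'.2 (hdbeq ▸ (SimpleGraph.Walk.end_mem_support w''))
      have hdmem : d ∈ (SimpleGraph.Walk.cons h (SimpleGraph.Walk.cons h2 w'')).support := by
        simp
      have hd := hv d hdmem (Ne.symm h.ne) hdb
      -- choose the side
      have : ∃ f : Fin n → Fin n ⊕ Fin n, (f = Sum.inl ∨ f = Sum.inr) ∧ v (f d) ≠ 0 := by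
        by_cases h1 : v (Sum.inl d) ≠ 0
        · exact ⟨Sum.inl, Or.inl rfl, h1⟩
        · exact ⟨Sum.inr, Or.inr rfl, by omega⟩
      obtain ⟨f, hf, hvfd⟩ := this
      set v' := v - Finsupp.single (f d) 1 with hv'def
      have hsplit : v = Finsupp.single (f d) 1 + v' := by
        ext j
        rw [Finsupp.add_apply, hv'def, Finsupp.tsub_apply]
        by_cases hj : j = f d
        · subst hj; simp; omega
        · simp [Finsupp.single_apply, Ne.symm hj, hj]
      have hmon : monomial v (1 : K) = X (f d) * monomial v' 1 := by
        rw [hsplit, X, monomial_mul, one_mul]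
      have expand : monomial v (1 : K) * edgeBinomial K a b
          = X (f a) * (monomial v' 1 * edgeBinomial K d b)
            + (X (f b) * monomial v' 1) * edgeBinomial K a d := by
        rw [hmon]
        linear_combination (monomial v' (1 : K)) * key_id (K := K) hf a b d
      rw [expand]
      refine Ideal.add_mem _ (Ideal.mul_mem_left _ _ ?_) (Ideal.mul_mem_left _ _ (adj_mem h))
      refine ih hp' v' ?_
      intro c hc hcd hcb
      have hca : c ≠ a := fun hceq => hanotin (hceq ▸ hc)
      have hcmem : c ∈ (SimpleGraph.Walk.cons h (SimpleGraph.Walk.cons h2 w'')).support := by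
        rw [SimpleGraph.Walk.support_cons]
        exact List.mem_cons_of_mem _ hc
      have := hv c hcmem hca hcb
      have hne1 : f d ≠ Sum.inl c := by
        rcases hf with rfl | rfl <;> simp [hcd.symm]
      have hne2 : f d ≠ Sum.inr c := by
        rcases hf with rfl | rfl <;> simp [hcd.symm]
      rw [hv'def, Finsupp.tsub_apply, Finsupp.tsub_apply,
        Finsupp.single_apply, if_neg hne1, Finsupp.single_apply, if_neg hne2]
      omega

section Span

variable (K n)

/-- `K`-span of monomial multiples of elements of `B`. -/
noncomputable def Wspan (B : Set (MvPolynomial (Fin n ⊕ Fin n) K)) :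
    Submodule K (MvPolynomial (Fin n ⊕ Fin n) K) :=
  Submodule.span K {p | ∃ v, ∃ b ∈ B, p = monomial v 1 * b}

variable {K n}

lemma mul_mem_Wspan {B : Set (MvPolynomial (Fin n ⊕ Fin n) K)} {p}
    (hp : p ∈ Wspan K n B) : ∀ r, r * p ∈ Wspan K n B := by
  refine Submodule.span_induction ?_ ?_ ?_ ?_ hp
  · rintro x ⟨v, b, hb, rfl⟩ r
    rw [as_sum r, Finset.sum_mul]
    refine Submodule.sum_mem _ fun v' _ => ?_
    have heq : monomial v' (coeff v' r) * (monomial v 1 * b)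
        = (coeff v' r) • (monomial (v' + v) 1 * b) := by
      rw [← mul_assoc, monomial_mul, ← smul_mul_assoc, smul_monomial]
      simp
    rw [heq]
    exact Submodule.smul_mem _ _ (Submodule.subset_span ⟨v' + v, b, hb, rfl⟩)
  · intro r; rw [mul_zero]; exact zero_mem _
  · intro x y _ _ ihx ihy r; rw [mul_add]; exact add_mem (ihx r) (ihy r)
  · intro a x _ ihx r; rw [mul_smul_comm]; exact Submodule.smul_mem _ _ (ihx r)

lemma span_le_Wspan {B : Set (MvPolynomial (Fin n ⊕ Fin n) K)} {x}
    (hx : x ∈ Ideal.span B) : x ∈ Wspan K n B := by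
  refine Submodule.span_induction ?_ ?_ ?_ ?_ hx
  · intro b hb; exact Submodule.subset_span ⟨0, b, hb, by simp⟩
  · exact zero_mem _
  · intro x y _ _ hx hy; exact add_mem hx hy
  · intro a x _ hx; rw [smul_eq_mul]; exact mul_mem_Wspan hx a

end Span

lemma weight_single_one (j : Fin n ⊕ Fin n) :
    Finsupp.weight (wt n) (Finsupp.single j 1) = wt n j := by
  rw [Finsupp.weight_apply, Finsupp.sum_single_index] <;> simp

lemma isWH_edgeBinomial (a b : Fin n) :
    IsWeightedHomogeneous (wt n) (edgeBinomial K a b)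
      (Pi.single a 1 + Pi.single b 1) := by
  have h1 : (X (Sum.inl a) * X (Sum.inr b) : MvPolynomial (Fin n ⊕ Fin n) K)
      = monomial (Finsupp.single (Sum.inl a) 1 + Finsupp.single (Sum.inr b) 1) 1 := by
    rw [X, X, monomial_mul, mul_one]
  have h2 : (X (Sum.inl b) * X (Sum.inr a) : MvPolynomial (Fin n ⊕ Fin n) K)
      = monomial (Finsupp.single (Sum.inl b) 1 + Finsupp.single (Sum.inr a) 1) 1 := by
    rw [X, X, monomial_mul, mul_one]
  have hw1 : Finsupp.weight (wt n)
      (Finsupp.single (Sum.inl a) 1 + Finsupp.single (Sum.inr b) 1)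
      = Pi.single a 1 + Pi.single b 1 := by
    rw [map_add, weight_single_one, weight_single_one]; rfl
  have hw2 : Finsupp.weight (wt n)
      (Finsupp.single (Sum.inl b) 1 + Finsupp.single (Sum.inr a) 1)
      = Pi.single a 1 + Pi.single b 1 := by
    rw [map_add, weight_single_one, weight_single_one]
    show Pi.single b 1 + Pi.single a 1 = _
    rw [add_comm]
  have m1 : (X (Sum.inl a) * X (Sum.inr b) : MvPolynomial (Fin n ⊕ Fin n) K)
      ∈ weightedHomogeneousSubmodule K (wt n) (Pi.single a 1 + Pi.single b 1) := by
    rw [h1, mem_weightedHomogeneousSubmodule]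
    exact isWeightedHomogeneous_monomial _ _ _ hw1
  have m2 : (X (Sum.inl b) * X (Sum.inr a) : MvPolynomial (Fin n ⊕ Fin n) K)
      ∈ weightedHomogeneousSubmodule K (wt n) (Pi.single a 1 + Pi.single b 1) := by
    rw [h2, mem_weightedHomogeneousSubmodule]
    exact isWeightedHomogeneous_monomial _ _ _ hw2
  have := sub_mem m1 m2
  rwa [mem_weightedHomogeneousSubmodule] at this

lemma component_mem (G : SimpleGraph (Fin n)) (u : Fin n → ℕ)
    {f : MvPolynomial (Fin n ⊕ Fin n) K}
    (hf : f ∈ componentPrime K G {i | u i = 0}) :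
    weightedHomogeneousComponent (wt n) u f ∈ binomialEdgeIdeal K G := by
  classical
  set S : Set (Fin n) := {i | u i = 0} with hS
  rw [componentPrime, Ideal.span_union, Submodule.mem_sup] at hf
  obtain ⟨g, hg, h, hh, rfl⟩ := hf
  rw [map_add]
  refine Ideal.add_mem _ ?_ ?_
  · -- the variable part has zero component in degree `u`
    have hA : {p : MvPolynomial (Fin n ⊕ Fin n) K |
          ∃ i ∈ S, p = X (Sum.inl i) ∨ p = X (Sum.inr i)}
        = MvPolynomial.X '' ((Sum.inl '' S) ∪ (Sum.inr '' S)) := by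
      ext p
      constructor
      · rintro ⟨i, hi, rfl | rfl⟩
        exacts [⟨Sum.inl i, Or.inl ⟨i, hi, rfl⟩, rfl⟩, ⟨Sum.inr i, Or.inr ⟨i, hi, rfl⟩, rfl⟩]
      · rintro ⟨j, ⟨i, hi, rfl⟩ | ⟨i, hi, rfl⟩, rfl⟩
        exacts [⟨i, hi, Or.inl rfl⟩, ⟨i, hi, Or.inr rfl⟩]
    rw [hA, mem_ideal_span_X_image] at hg
    have hgz : weightedHomogeneousComponent (wt n) u g = 0 := by
      ext d
      rw [coeff_weightedHomogeneousComponent, coeff_zero]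
      split_ifs with hweq
      · by_contra hcd
        obtain ⟨j, hj, hdj⟩ := hg d (mem_support_iff.mpr hcd)
        have : ∃ i, i ∈ S ∧ (d (Sum.inl i) ≠ 0 ∨ d (Sum.inr i) ≠ 0) := by
          rcases hj with ⟨i, hi, rfl⟩ | ⟨i, hi, rfl⟩
          exacts [⟨i, hi, Or.inl hdj⟩, ⟨i, hi, Or.inr hdj⟩]
        obtain ⟨i, hi, hd⟩ := this
        have hwi := weight_wt_apply d i
        rw [hweq] at hwi
        have : u i = 0 := hi
        omega
      · rfl
    rw [hgz]
    exact Ideal.zero_mem _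
  · -- the binomial part
    have hh' := span_le_Wspan hh
    have hmem : weightedHomogeneousComponent (wt n) u h ∈
        Submodule.map (weightedHomogeneousComponent (R := K) (wt n) u)
          (Wspan K n {p | ∃ a b : (Sᶜ : Set (Fin n)),
            (G.induce Sᶜ).Reachable a b ∧ p = edgeBinomial K a.1 b.1}) :=
      ⟨h, hh', rfl⟩
    rw [Wspan, Submodule.map_span] at hmem
    have hle : Submodule.span K ((weightedHomogeneousComponent (R := K) (wt n) u) ''
          {p | ∃ v, ∃ b ∈ {p | ∃ a b : (Sᶜ : Set (Fin n)),
            (G.induce Sᶜ).Reachable a b ∧ p = edgeBinomial K a.1 b.1},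
            p = monomial v 1 * b})
        ≤ (binomialEdgeIdeal K G).restrictScalars K := by
      rw [Submodule.span_le]
      rintro p ⟨q, ⟨v, bb, ⟨a, b, hreach, rfl⟩, rfl⟩, rfl⟩
      have hWH : IsWeightedHomogeneous (wt n)
          (monomial v (1 : K) * edgeBinomial K a.1 b.1)
          (Finsupp.weight (wt n) v + (Pi.single a.1 1 + Pi.single b.1 1)) :=
        (isWeightedHomogeneous_monomial _ _ _ rfl).mul (isWH_edgeBinomial _ _)
      by_cases hdeg : u = Finsupp.weight (wt n) v + (Pi.single a.1 1 + Pi.single b.1 1)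
      · rw [SetLike.mem_coe, Submodule.restrictScalars_mem,
          IsWeightedHomogeneous.weightedHomogeneousComponent_same (hdeg ▸ hWH)]
        -- use a path from a to b
        obtain ⟨wk0⟩ := hreach
        let p0 := wk0.toPath
        let wk : G.Walk a.1 b.1 := SimpleGraph.Walk.map (SimpleGraph.Embedding.induce Sᶜ).toHom p0.1
        have hwkpath : wk.IsPath :=
          SimpleGraph.Walk.map_isPath_of_injective Subtype.val_injective p0.2
        refine walk_mem wk hwkpath v ?_
        intro c hc hca hcb
        rw [show wk.support = (p0.1.map (SimpleGraph.Embedding.induce Sᶜ).toHom).support from rfl,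
          SimpleGraph.Walk.support_map, List.mem_map] at hc
        obtain ⟨c', _, rfl⟩ := hc
        rw [show ((SimpleGraph.Embedding.induce Sᶜ).toHom : (Sᶜ : Set (Fin n)) → Fin n)
            = Subtype.val from rfl] at hca hcb ⊢
        have hcS : (c' : Fin n) ∈ Sᶜ := c'.2
        have hu : u (c' : Fin n) ≠ 0 := by
          have h0 := hcS
          simp only [hS, Set.mem_compl_iff, Set.mem_setOf_eq] at h0
          exact h0
        have hdc := congrFun hdeg (c' : Fin n)
        have hwc := weight_wt_apply v (c' : Fin n)
        have h1 : (Pi.single a.1 1 : Fin n → ℕ) (c' : Fin n) = 0 := by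
          rw [Pi.single_apply, if_neg]
          intro hh1
          exact hca (by simp [hh1])
        have h2 : (Pi.single b.1 1 : Fin n → ℕ) (c' : Fin n) = 0 := by
          rw [Pi.single_apply, if_neg]
          intro hh2
          exact hcb (by simp [hh2])
        rw [Pi.add_apply, Pi.add_apply, h1, h2] at hdc
        omega
      · rw [SetLike.mem_coe, Submodule.restrictScalars_mem,
          IsWeightedHomogeneous.weightedHomogeneousComponent_ne _ hWH hdeg]
        exact Ideal.zero_mem _
    exact hle hmem

end BEIAux

/-- `J_G` is the intersection of the prime ideals `P_S(G)` over all subsets `S ⊆ [n]`. -/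
theorem binomialEdgeIdeal_eq_iInf_componentPrime (K : Type*) [Field K] {n : ℕ}
    (G : SimpleGraph (Fin n)) :
    binomialEdgeIdeal K G = ⨅ S : Set (Fin n), componentPrime K G S := by
  classical
  apply le_antisymm
  · refine le_iInf fun S => ?_
    rw [binomialEdgeIdeal]
    refine Ideal.span_le.mpr ?_
    rintro p ⟨i, j, hadj, hij, rfl⟩
    rw [SetLike.mem_coe]
    by_cases hi : i ∈ S
    · have h1 : X (Sum.inl i) ∈ componentPrime K G S :=
        Ideal.subset_span (Or.inl ⟨i, hi, Or.inl rfl⟩)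
      have h2 : X (Sum.inr i) ∈ componentPrime K G S :=
        Ideal.subset_span (Or.inl ⟨i, hi, Or.inr rfl⟩)
      have heq : edgeBinomial K i j
          = X (Sum.inr j) * X (Sum.inl i) - X (Sum.inl j) * X (Sum.inr i) := by
        rw [edgeBinomial]; ring
      rw [heq]
      exact sub_mem (Ideal.mul_mem_left _ _ h1) (Ideal.mul_mem_left _ _ h2)
    · by_cases hj : j ∈ S
      · have h1 : X (Sum.inl j) ∈ componentPrime K G S :=
          Ideal.subset_span (Or.inl ⟨j, hj, Or.inl rfl⟩)
        have h2 : X (Sum.inr j) ∈ componentPrime K G S :=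
          Ideal.subset_span (Or.inl ⟨j, hj, Or.inr rfl⟩)
        have heq : edgeBinomial K i j
            = X (Sum.inl i) * X (Sum.inr j) - X (Sum.inr i) * X (Sum.inl j) := by
          rw [edgeBinomial]; ring
        rw [heq]
        exact sub_mem (Ideal.mul_mem_left _ _ h2) (Ideal.mul_mem_left _ _ h1)
      · refine Ideal.subset_span (Or.inr ⟨⟨i, hi⟩, ⟨j, hj⟩, ?_, rfl⟩)
        exact SimpleGraph.Adj.reachable (by simpa using hadj)
  · intro f hf
    rw [Ideal.mem_iInf] at hf
    have hfin := weightedHomogeneousComponent_finsupp (w := BEIAux.wt n) f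
    rw [← sum_weightedHomogeneousComponent (BEIAux.wt n) f, finsum_eq_sum _ hfin]
    refine Ideal.sum_mem _ fun u _ => ?_
    exact BEIAux.component_mem G u (hf {i | u i = 0})
end

section
/- Let G be a cycle of length n ≥ 3. Then J_G is a prime ideal if and only if n = 3. -/
open MvPolynomial

namespace Cyc3
open Finsupp Sum

noncomputable def pack (a b : Fin 3 → ℕ) : (Fin 3 ⊕ Fin 3) →₀ ℕ :=
  Finsupp.equivFunOnFinite.symm (Sum.elim a b)

@[simp] lemma pack_inl (a b : Fin 3 → ℕ) (k : Fin 3) : pack a b (Sum.inl k) = a k := rfl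
@[simp] lemma pack_inr (a b : Fin 3 → ℕ) (k : Fin 3) : pack a b (Sum.inr k) = b k := rfl

def upd (f : Fin 3 → ℕ) (i j : Fin 3) : Fin 3 → ℕ :=
  fun k => if k = i then f i - 1 else if k = j then f j + 1 else f k

lemma sum_upd (f : Fin 3 → ℕ) (i j : Fin 3) (hij : i ≠ j) (h0 : 0 < f i) :
    upd f i j 0 + upd f i j 1 + upd f i j 2 = f 0 + f 1 + f 2 := by
  fin_cases i <;> fin_cases j <;>
    simp_all only [upd, Fin.zero_eta, Fin.mk_one, Fin.reduceFinMk, Fin.reduceEq, ne_eq,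
      if_true, if_false, ite_true, ite_false, not_false_iff, reduceIte] <;>
    first
      | omega
      | exact hij trivial

lemma dist_upd (a a' : Fin 3 → ℕ) (i j : Fin 3) (hij : i ≠ j) (hi : a' i < a i)
    (hj : a j < a' j) :
    Nat.dist (upd a i j 0) (a' 0) + Nat.dist (upd a i j 1) (a' 1)
      + Nat.dist (upd a i j 2) (a' 2) + 2
    = Nat.dist (a 0) (a' 0) + Nat.dist (a 1) (a' 1) + Nat.dist (a 2) (a' 2) := by
  fin_cases i <;> fin_cases j <;>
    simp_all only [upd, Nat.dist, Fin.zero_eta, Fin.mk_one, Fin.reduceFinMk, Fin.reduceEq, ne_eq,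
      if_true, if_false, ite_true, ite_false, not_false_iff, reduceIte] <;>
    first
      | omega
      | exact hij trivial

lemma upd_add (a b a' b' : Fin 3 → ℕ) (i j k : Fin 3) (hij : i ≠ j) (hi : a' i < a i)
    (hbj : 0 < b j) (h : ∀ k, a k + b k = a' k + b' k) :
    upd a i j k + upd b j i k = a' k + b' k := by
  by_cases e1 : k = i
  · have := h i
    simp [upd, e1, hij]
    omega
  · by_cases e2 : k = j
    · have := h j
      simp [upd, e2, Ne.symm hij]
      omega
    · have := h k
      simp [upd, e1, e2]
      omega

variable (K : Type*) [Field K]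

lemma mem_J (i j : Fin 3) (h : i ≠ j) :
    edgeBinomial K i j ∈ binomialEdgeIdeal K (SimpleGraph.cycleGraph 3) := by
  have adj : ∀ u v : Fin 3, u ≠ v → (SimpleGraph.cycleGraph 3).Adj u v := by
    rw [SimpleGraph.cycleGraph_three_eq_top]; intro u v huv; exact huv
  rcases lt_or_gt_of_ne h with hlt | hgt
  · exact Ideal.subset_span ⟨i, j, adj i j h, hlt, rfl⟩
  · have : edgeBinomial K i j = -(edgeBinomial K j i) := by
      simp only [edgeBinomial]; ring
    rw [this]
    exact neg_mem (Ideal.subset_span ⟨j, i, adj j i h.symm, hgt, rfl⟩)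

lemma swap_mem (a b : Fin 3 → ℕ) (i j : Fin 3) (hij : i ≠ j) (hai : 0 < a i) (hbj : 0 < b j) :
    (monomial (pack a b) (1 : K)) - monomial (pack (upd a i j) (upd b j i)) 1
      ∈ binomialEdgeIdeal K (SimpleGraph.cycleGraph 3) := by
  have key : (monomial (pack a b) (1 : K)) - monomial (pack (upd a i j) (upd b j i)) 1
      = monomial (pack (fun k => if k = i then a i - 1 else a k)
                       (fun k => if k = j then b j - 1 else b k)) 1 * edgeBinomial K i j := by
    set m := pack (fun k => if k = i then a i - 1 else a k)
      (fun k => if k = j then b j - 1 else b k) with hm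
    have e1 : pack a b = m + (Finsupp.single (inl i) 1 + Finsupp.single (inr j) 1) := by
      ext v
      rcases v with k | k <;>
        simp only [hm, Finsupp.add_apply, pack_inl, pack_inr, Finsupp.single_apply] <;>
        by_cases h1 : k = i <;> by_cases h2 : k = j <;>
        subst_vars <;> simp_all <;> omega
    have e2 : pack (upd a i j) (upd b j i)
        = m + (Finsupp.single (inl j) 1 + Finsupp.single (inr i) 1) := by
      ext v
      rcases v with k | k <;>
        simp only [hm, upd, Finsupp.add_apply, pack_inl, pack_inr, Finsupp.single_apply] <;>
        by_cases h1 : k = i <;> by_cases h2 : k = j <;>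
        subst_vars <;> simp_all <;> omega
    rw [e1, e2, edgeBinomial, mul_sub]
    simp only [X, monomial_mul, one_mul, mul_one]
  rw [key]
  exact Ideal.mul_mem_left _ _ (mem_J K i j hij)

lemma connect (N : ℕ) : ∀ (a a' b b' : Fin 3 → ℕ),
    (∀ k, a k + b k = a' k + b' k) →
    (a 0 + a 1 + a 2 = a' 0 + a' 1 + a' 2) →
    (Nat.dist (a 0) (a' 0) + Nat.dist (a 1) (a' 1) + Nat.dist (a 2) (a' 2) ≤ N) →
    monomial (pack a b) (1 : K) - monomial (pack a' b') 1
      ∈ binomialEdgeIdeal K (SimpleGraph.cycleGraph 3) := by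
  induction N with
  | zero =>
    intro a a' b b' hab hsum hdist
    simp only [Nat.dist] at hdist
    have h0 : a 0 = a' 0 := by omega
    have h1 : a 1 = a' 1 := by omega
    have h2 : a 2 = a' 2 := by omega
    have ha : a = a' := by
      funext k
      fin_cases k <;> simp only [Fin.zero_eta, Fin.mk_one, Fin.reduceFinMk] <;> assumption
    have hb : b = b' := by
      funext k
      have h1 := hab k
      rw [ha] at h1
      omega
    rw [ha, hb, sub_self]
    exact Ideal.zero_mem _
  | succ N ih =>
    intro a a' b b' hab hsum hdist
    by_cases hEq : ∀ k, a k = a' k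
    · have ha : a = a' := funext hEq
      have hb : b = b' := by
        funext k; have h1 := hab k; rw [ha] at h1; omega
      rw [ha, hb, sub_self]
      exact Ideal.zero_mem _
    · push_neg at hEq
      obtain ⟨k0, hk0⟩ := hEq
      have h00 : a 0 ≠ a' 0 ∨ a 1 ≠ a' 1 ∨ a 2 ≠ a' 2 := by
        fin_cases k0 <;>
          simp only [Fin.zero_eta, Fin.mk_one, Fin.reduceFinMk] at hk0 <;> tauto
      have hex1 : ∃ i, a' i < a i := by
        rcases Nat.lt_or_ge (a' 0) (a 0) with h | h
        · exact ⟨0, h⟩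
        rcases Nat.lt_or_ge (a' 1) (a 1) with h' | h'
        · exact ⟨1, h'⟩
        rcases Nat.lt_or_ge (a' 2) (a 2) with h'' | h''
        · exact ⟨2, h''⟩
        exfalso; rcases h00 with h0 | h0 | h0 <;> omega
      have hex2 : ∃ j, a j < a' j := by
        rcases Nat.lt_or_ge (a 0) (a' 0) with h | h
        · exact ⟨0, h⟩
        rcases Nat.lt_or_ge (a 1) (a' 1) with h' | h'
        · exact ⟨1, h'⟩
        rcases Nat.lt_or_ge (a 2) (a' 2) with h'' | h''
        · exact ⟨2, h''⟩
        exfalso; rcases h00 with h0 | h0 | h0 <;> omega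
      obtain ⟨i, hi⟩ := hex1
      obtain ⟨j, hj⟩ := hex2
      have hij : i ≠ j := by rintro rfl; omega
      have hbj : 0 < b j := by have := hab j; omega
      have h1 : monomial (pack a b) (1 : K) - monomial (pack (upd a i j) (upd b j i)) 1
          ∈ binomialEdgeIdeal K (SimpleGraph.cycleGraph 3) :=
        swap_mem K a b i j hij (by omega) hbj
      have h2 : monomial (pack (upd a i j) (upd b j i)) (1 : K) - monomial (pack a' b') 1
          ∈ binomialEdgeIdeal K (SimpleGraph.cycleGraph 3) := by
        apply ih (upd a i j) a' (upd b j i) b'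
        · intro k
          exact upd_add a b a' b' i j k hij hi hbj hab
        · rw [sum_upd a i j hij (by omega)]
          exact hsum
        · have hd := dist_upd a a' i j hij hi hj
          omega
      have := Ideal.add_mem _ h1 h2
      simpa using this


def xdeg (d : (Fin 3 ⊕ Fin 3) →₀ ℕ) : ℕ := d (inl 0) + d (inl 1) + d (inl 2)
def ydeg (d : (Fin 3 ⊕ Fin 3) →₀ ℕ) : ℕ := d (inr 0) + d (inr 1) + d (inr 2)
def mix (d : (Fin 3 ⊕ Fin 3) →₀ ℕ) : Fin 3 → ℕ := fun k => d (inl k) + d (inr k)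

def canon (s : ℕ) (c : Fin 3 → ℕ) : Fin 3 → ℕ := fun k =>
  if k = 0 then min (c 0) s
  else if k = 1 then min (c 1) (s - min (c 0) s)
  else min (c 2) (s - min (c 0) s - min (c 1) (s - min (c 0) s))

lemma canon_le (s : ℕ) (c : Fin 3 → ℕ) (k : Fin 3) : canon s c k ≤ c k := by
  fin_cases k <;>
    simp only [canon, Fin.zero_eta, Fin.mk_one, Fin.reduceFinMk, Fin.reduceEq,
      if_true, if_false, ite_true, ite_false, reduceIte] <;>
    omega

lemma canon_sum (s : ℕ) (c : Fin 3 → ℕ) (h : s ≤ c 0 + c 1 + c 2) :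
    canon s c 0 + canon s c 1 + canon s c 2 = s := by
  simp only [canon, Fin.reduceEq, if_true, if_false, ite_true, ite_false, reduceIte]
  omega

noncomputable def E (d : (Fin 3 ⊕ Fin 3) →₀ ℕ) : (Fin 2 ⊕ Fin 3) →₀ ℕ :=
  Finsupp.equivFunOnFinite.symm
    (Sum.elim (fun t : Fin 2 => if t = 0 then xdeg d else ydeg d) (mix d))

@[simp] lemma E_inl (d : (Fin 3 ⊕ Fin 3) →₀ ℕ) (t : Fin 2) :
    E d (inl t) = if t = 0 then xdeg d else ydeg d := rfl
@[simp] lemma E_inr (d : (Fin 3 ⊕ Fin 3) →₀ ℕ) (r : Fin 3) : E d (inr r) = mix d r := rfl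

lemma E_zero : E 0 = 0 := by
  ext w
  rcases w with t | r <;> simp [xdeg, ydeg, mix, ite_self]

lemma E_add (c d : (Fin 3 ⊕ Fin 3) →₀ ℕ) : E (c + d) = E c + E d := by
  ext w
  rcases w with t | r
  · by_cases ht : t = 0 <;> simp [ht, xdeg, ydeg, Finsupp.add_apply] <;> ring
  · simp [mix, Finsupp.add_apply]
    ring

lemma E_single_inl (i : Fin 3) (m : ℕ) :
    E (Finsupp.single (inl i) m)
      = Finsupp.single (inl (0 : Fin 2)) m + Finsupp.single (inr i) m := by
  fin_cases i <;>
    · ext w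
      rcases w with t | r
      · by_cases ht : t = 0
        · simp_all [xdeg, ydeg, mix, Finsupp.single_apply]
        · have h1 : t = 1 := by fin_cases t <;> simp_all
          simp_all [xdeg, ydeg, mix, Finsupp.single_apply]
      · fin_cases r <;> simp [mix, Finsupp.single_apply]

lemma E_single_inr (i : Fin 3) (m : ℕ) :
    E (Finsupp.single (inr i) m)
      = Finsupp.single (inl (1 : Fin 2)) m + Finsupp.single (inr i) m := by
  fin_cases i <;>
    · ext w
      rcases w with t | r
      · by_cases ht : t = 0
        · simp_all [xdeg, ydeg, mix, Finsupp.single_apply]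
        · have h1 : t = 1 := by fin_cases t <;> simp_all
          simp_all [xdeg, ydeg, mix, Finsupp.single_apply]
      · fin_cases r <;> simp [mix, Finsupp.single_apply]


noncomputable def nf (d : (Fin 3 ⊕ Fin 3) →₀ ℕ) : (Fin 3 ⊕ Fin 3) →₀ ℕ :=
  pack (canon (xdeg d) (mix d)) (fun k => mix d k - canon (xdeg d) (mix d) k)

lemma xdeg_le_mix (d : (Fin 3 ⊕ Fin 3) →₀ ℕ) : xdeg d ≤ mix d 0 + mix d 1 + mix d 2 := by
  simp only [xdeg, mix]; omega

lemma congr_nf (d : (Fin 3 ⊕ Fin 3) →₀ ℕ) :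
    monomial d (1 : K) - monomial (nf d) 1
      ∈ binomialEdgeIdeal K (SimpleGraph.cycleGraph 3) := by
  have hpack : pack (fun k => d (inl k)) (fun k => d (inr k)) = d := by
    ext v; rcases v with k | k <;> rfl
  have h := connect K
      (Nat.dist (d (inl 0)) (canon (xdeg d) (mix d) 0)
        + Nat.dist (d (inl 1)) (canon (xdeg d) (mix d) 1)
        + Nat.dist (d (inl 2)) (canon (xdeg d) (mix d) 2))
      (fun k => d (inl k)) (canon (xdeg d) (mix d))
      (fun k => d (inr k)) (fun k => mix d k - canon (xdeg d) (mix d) k)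
      (by
        intro k
        have := canon_le (xdeg d) (mix d) k
        simp only [mix] at *
        omega)
      (by
        rw [canon_sum (xdeg d) (mix d) (xdeg_le_mix d)]
        rfl)
      le_rfl
  rwa [hpack] at h

noncomputable def phi : MvPolynomial (Fin 3 ⊕ Fin 3) K →ₐ[K] MvPolynomial (Fin 2 ⊕ Fin 3) K :=
  aeval (Sum.elim (fun i : Fin 3 => X (inl 0) * X (inr i))
    (fun i : Fin 3 => X (inl 1) * X (inr i)))

lemma phi_X_pow (v : Fin 3 ⊕ Fin 3) (m : ℕ) :
    phi K (X v ^ m) = monomial (E (Finsupp.single v m)) 1 := by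
  rcases v with i | i
  · rw [E_single_inl, map_pow]
    have h1 : phi K (X (inl i)) = X (inl (0 : Fin 2)) * X (inr i) := by
      simp [phi]
    rw [h1]
    rw [show ((X (inl (0 : Fin 2)) * X (inr i)) : MvPolynomial (Fin 2 ⊕ Fin 3) K)
        = monomial (Finsupp.single (inl (0 : Fin 2)) 1 + Finsupp.single (inr i) 1) 1 by
      rw [X, X, monomial_mul, mul_one]]
    rw [monomial_pow, one_pow, smul_add, Finsupp.smul_single, Finsupp.smul_single,
      smul_eq_mul, mul_one]
  · rw [E_single_inr, map_pow]
    have h1 : phi K (X (inr i)) = X (inl (1 : Fin 2)) * X (inr i) := by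
      simp [phi]
    rw [h1]
    rw [show ((X (inl (1 : Fin 2)) * X (inr i)) : MvPolynomial (Fin 2 ⊕ Fin 3) K)
        = monomial (Finsupp.single (inl (1 : Fin 2)) 1 + Finsupp.single (inr i) 1) 1 by
      rw [X, X, monomial_mul, mul_one]]
    rw [monomial_pow, one_pow, smul_add, Finsupp.smul_single, Finsupp.smul_single,
      smul_eq_mul, mul_one]

lemma phi_monomial (d : (Fin 3 ⊕ Fin 3) →₀ ℕ) (k : K) :
    phi K (monomial d k) = monomial (E d) k := by
  induction d using Finsupp.induction with
  | zero =>
    rw [E_zero]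
    simp only [monomial_zero']
    simp [phi]
  | single_add v m d hvd hm ih =>
    have hsplit : (monomial (Finsupp.single v m + d) k : MvPolynomial (Fin 3 ⊕ Fin 3) K)
        = monomial (Finsupp.single v m) 1 * monomial d k := by
      rw [monomial_mul, one_mul]
    rw [hsplit, map_mul, ih, ← X_pow_eq_monomial, phi_X_pow, monomial_mul, one_mul, E_add]

lemma J_le_ker :
    binomialEdgeIdeal K (SimpleGraph.cycleGraph 3) ≤ RingHom.ker (phi K).toRingHom := by
  rw [binomialEdgeIdeal, Ideal.span_le]
  rintro p ⟨i, j, -, -, rfl⟩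
  simp only [SetLike.mem_coe, RingHom.mem_ker, AlgHom.toRingHom_eq_coe, RingHom.coe_coe,
    edgeBinomial, map_sub, map_mul]
  simp [phi]
  ring

lemma phi_eq_mapDomain (f : MvPolynomial (Fin 3 ⊕ Fin 3) K) :
    phi K f = AddMonoidAlgebra.mapDomain E f := by
  induction f using MvPolynomial.induction_on' with
  | monomial u a =>
    rw [phi_monomial]
    conv_rhs => rw [← single_eq_monomial]
    rw [AddMonoidAlgebra.mapDomain_single, single_eq_monomial]
  | add p q hp hq =>
    rw [map_add, hp, hq, AddMonoidAlgebra.mapDomain_add]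

noncomputable def Nf (f : MvPolynomial (Fin 3 ⊕ Fin 3) K) : MvPolynomial (Fin 3 ⊕ Fin 3) K :=
  AddMonoidAlgebra.mapDomain nf f

lemma Nf_monomial (u : (Fin 3 ⊕ Fin 3) →₀ ℕ) (a : K) :
    Nf K (monomial u a) = monomial (nf u) a := by
  unfold Nf
  conv_lhs => rw [← single_eq_monomial]
  rw [AddMonoidAlgebra.mapDomain_single, single_eq_monomial]

lemma Nf_add (p q : MvPolynomial (Fin 3 ⊕ Fin 3) K) : Nf K (p + q) = Nf K p + Nf K q := by
  unfold Nf
  exact AddMonoidAlgebra.mapDomain_add _ _ _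

lemma nf_xdeg (d : (Fin 3 ⊕ Fin 3) →₀ ℕ) : xdeg (nf d) = xdeg d := by
  show canon (xdeg d) (mix d) 0 + canon (xdeg d) (mix d) 1 + canon (xdeg d) (mix d) 2 = xdeg d
  exact canon_sum _ _ (xdeg_le_mix d)

lemma nf_mix (d : (Fin 3 ⊕ Fin 3) →₀ ℕ) : mix (nf d) = mix d := by
  funext k
  show canon (xdeg d) (mix d) k + (mix d k - canon (xdeg d) (mix d) k) = mix d k
  have := canon_le (xdeg d) (mix d) k
  omega

lemma nf_congr (d1 d2 : (Fin 3 ⊕ Fin 3) →₀ ℕ) (hx : xdeg d1 = xdeg d2) (hm : mix d1 = mix d2) :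
    nf d1 = nf d2 := by
  unfold nf
  rw [hx, hm]

lemma E_injOn : Set.InjOn E (Set.range nf) := by
  rintro _ ⟨d1, rfl⟩ _ ⟨d2, rfl⟩ hE
  have hx : xdeg (nf d1) = xdeg (nf d2) := by
    have h := congrArg (fun g : (Fin 2 ⊕ Fin 3) →₀ ℕ => g (inl 0)) hE
    simpa using h
  have hm : mix (nf d1) = mix (nf d2) := by
    funext r
    have h := congrArg (fun g : (Fin 2 ⊕ Fin 3) →₀ ℕ => g (inr r)) hE
    simpa using h
  calc nf d1 = nf (nf d1) := (nf_congr (nf d1) d1 (nf_xdeg d1) (nf_mix d1)).symm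
    _ = nf (nf d2) := nf_congr _ _ hx hm
    _ = nf d2 := nf_congr (nf d2) d2 (nf_xdeg d2) (nf_mix d2)

lemma sub_nf_mem (f : MvPolynomial (Fin 3 ⊕ Fin 3) K) :
    f - Nf K f ∈ binomialEdgeIdeal K (SimpleGraph.cycleGraph 3) := by
  induction f using MvPolynomial.induction_on' with
  | monomial u a =>
    rw [Nf_monomial]
    have h2 : (monomial u a : MvPolynomial (Fin 3 ⊕ Fin 3) K) - monomial (nf u) a
        = C a * (monomial u 1 - monomial (nf u) 1) := by
      rw [mul_sub, C_mul_monomial, C_mul_monomial, mul_one]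
    rw [h2]
    exact Ideal.mul_mem_left _ _ (congr_nf K u)
  | add p q hp hq =>
    have h := Ideal.add_mem _ hp hq
    have heq : p - Nf K p + (q - Nf K q) = p + q - Nf K (p + q) := by
      rw [Nf_add]
      ring
    rwa [heq] at h

lemma ker_le_J :
    RingHom.ker (phi K).toRingHom ≤ binomialEdgeIdeal K (SimpleGraph.cycleGraph 3) := by
  intro f hf
  classical
  have h1 : f - Nf K f ∈ binomialEdgeIdeal K (SimpleGraph.cycleGraph 3) :=
    sub_nf_mem K f
  have hf0 : phi K f = 0 := hf
  have h2 : phi K (Nf K f) = 0 := by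
    have h3 := J_le_ker K h1
    have h4 : phi K (f - Nf K f) = 0 := h3
    rw [map_sub, hf0, zero_sub, neg_eq_zero] at h4
    exact h4
  have h5 : Finsupp.mapDomain E (AddMonoidAlgebra.coeff (Nf K f))
      = Finsupp.mapDomain E (AddMonoidAlgebra.coeff (0 : MvPolynomial (Fin 3 ⊕ Fin 3) K)) := by
    have h5' : AddMonoidAlgebra.mapDomain E (Nf K f)
        = AddMonoidAlgebra.mapDomain E (0 : MvPolynomial (Fin 3 ⊕ Fin 3) K) := by
      rw [← phi_eq_mapDomain, ← phi_eq_mapDomain, h2, map_zero]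
    exact congrArg AddMonoidAlgebra.coeff h5'
  have hsupp1 : ((AddMonoidAlgebra.coeff (Nf K f)).support : Set ((Fin 3 ⊕ Fin 3) →₀ ℕ))
      ⊆ Set.range nf := by
    intro x hx
    have hx2 : x ∈ (Finsupp.mapDomain nf (AddMonoidAlgebra.coeff f)).support := hx
    have := Finsupp.mapDomain_support (f := nf) (s := AddMonoidAlgebra.coeff f) hx2
    rcases Finset.mem_image.1 this with ⟨y, _, rfl⟩
    exact ⟨y, rfl⟩
  have hsupp2 : ((AddMonoidAlgebra.coeff (0 : MvPolynomial (Fin 3 ⊕ Fin 3) K)).support : Set ((Fin 3 ⊕ Fin 3) →₀ ℕ)) ⊆ Set.range nf := by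
    simp
  have h6 : Nf K f = (0 : MvPolynomial (Fin 3 ⊕ Fin 3) K) :=
    AddMonoidAlgebra.coeff_injective
      (Finsupp.mapDomain_injOn (Set.range nf) (E_injOn) hsupp1 hsupp2 h5)
  rw [h6, sub_zero] at h1
  exact h1

lemma J_eq_ker :
    binomialEdgeIdeal K (SimpleGraph.cycleGraph 3) = RingHom.ker (phi K).toRingHom :=
  le_antisymm (J_le_ker K) (ker_le_J K)

lemma J_isPrime : (binomialEdgeIdeal K (SimpleGraph.cycleGraph 3)).IsPrime := by
  rw [J_eq_ker]
  exact RingHom.ker_isPrime _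

end Cyc3

private theorem fwd (K : Type*) [Field K] {n : ℕ} (hn : 4 ≤ n)
    (hp : (binomialEdgeIdeal K (SimpleGraph.cycleGraph n)).IsPrime) : False := by
  set J := binomialEdgeIdeal K (SimpleGraph.cycleGraph n) with hJ
  have h4 : 0 < n := by omega
  let i0 : Fin n := ⟨0, by omega⟩
  let i1 : Fin n := ⟨1, by omega⟩
  let i2 : Fin n := ⟨2, by omega⟩
  -- membership of the product
  have hmem : X (Sum.inl i1) * edgeBinomial K i0 i2 ∈ J := by
    have h1 : edgeBinomial K i0 i1 ∈ J := by
      apply Ideal.subset_span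
      exact ⟨i0, i1, by
        constructor
        · rw [SimpleGraph.cycleGraph_adj']
          right
          show ((i1 - i0).val = 1)
          rw [Fin.sub_def]
          show (n - 0 + 1) % n = 1
          rw [Nat.sub_zero, Nat.add_mod_left, Nat.mod_eq_of_lt (by omega)]
        · exact ⟨by simp [i0, i1, Fin.lt_def], rfl⟩⟩
    have h2 : edgeBinomial K i1 i2 ∈ J := by
      apply Ideal.subset_span
      exact ⟨i1, i2, by
        constructor
        · rw [SimpleGraph.cycleGraph_adj']
          right
          show ((i2 - i1).val = 1)
          rw [Fin.sub_def]
          show (n - 1 + 2) % n = 1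
          rw [show n - 1 + 2 = n + 1 by omega, Nat.add_mod_left, Nat.mod_eq_of_lt (by omega)]
        · exact ⟨by simp [i1, i2, Fin.lt_def], rfl⟩⟩
    have key : X (Sum.inl i1) * edgeBinomial K i0 i2
        = X (Sum.inl i0) * edgeBinomial K i1 i2 + X (Sum.inl i2) * edgeBinomial K i0 i1 := by
      simp only [edgeBinomial]; ring
    rw [key]
    exact Ideal.add_mem _ (Ideal.mul_mem_left _ _ h2) (Ideal.mul_mem_left _ _ h1)
  rcases hp.mem_or_mem hmem with h | h
  · -- x_1 ∉ J
    have : (aeval (fun v : Fin n ⊕ Fin n => match v with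
        | Sum.inl k => if k = i1 then (1 : K) else 0
        | Sum.inr _ => 0) : MvPolynomial (Fin n ⊕ Fin n) K →ₐ[K] K) (X (Sum.inl i1)) = 0 := by
      have hle : J ≤ RingHom.ker (aeval (R := K) (fun v : Fin n ⊕ Fin n => match v with
          | Sum.inl k => if k = i1 then (1 : K) else 0
          | Sum.inr _ => 0)).toRingHom := by
        rw [hJ, binomialEdgeIdeal, Ideal.span_le]
        rintro p ⟨i, j, hadj, hij, rfl⟩
        simp [RingHom.mem_ker, edgeBinomial]
      simpa [RingHom.mem_ker] using hle h
    simp at this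
  · -- f_{0,2} ∉ J
    have hle : J ≤ RingHom.ker (aeval (R := K) (fun v : Fin n ⊕ Fin n => match v with
        | Sum.inl k => if k = i2 then (1 : K) else 0
        | Sum.inr k => if k = i0 then (1 : K) else 0)).toRingHom := by
      rw [hJ, binomialEdgeIdeal, Ideal.span_le]
      rintro p ⟨i, j, hadj, hij, rfl⟩
      have hA : (n - j.val + i.val) % n = 1 ∨ (n - i.val + j.val) % n = 1 := by
        have hadj' := SimpleGraph.cycleGraph_adj'.1 hadj
        rw [Fin.sub_def, Fin.sub_def] at hadj'
        exact hadj'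
      simp only [RingHom.mem_ker, edgeBinomial, Set.mem_setOf_eq]
      simp only [AlgHom.toRingHom_eq_coe, RingHom.coe_coe, map_sub, map_mul, aeval_X]
      have hij' : i.val < j.val := hij
      have hi : i ≠ i2 ∨ j ≠ i0 := by
        right; intro hj; rw [hj] at hij'; simp [i0] at hij'
      have hj2 : j = i2 → i ≠ i0 := by
        intro hj hi0
        have hjv : j.val = 2 := by rw [hj]
        have hiv : i.val = 0 := by rw [hi0]
        rw [hjv, hiv] at hA
        rw [Nat.add_zero, Nat.sub_zero, Nat.mod_eq_of_lt (show n - 2 < n by omega),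
          show (n + 2) % n = 2 % n from Nat.add_mod_left n 2 ▸ rfl] at hA
        rw [Nat.mod_eq_of_lt (show 2 < n by omega)] at hA
        omega
      rcases hi with h' | h'
      · by_cases hj : j = i2
        · have := hj2 hj
          simp [h', this]
        · simp [h', hj]
      · by_cases hj : j = i2
        · have := hj2 hj
          simp [h', this]
        · simp [h', hj]
    have := hle h
    simp only [RingHom.mem_ker, AlgHom.toRingHom_eq_coe, RingHom.coe_coe, edgeBinomial,
      map_sub, map_mul, aeval_X] at this
    have h02 : i0 ≠ i2 := by simp [i0, i2, Fin.ext_iff]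
    simp [h02] at this


/-- For the cycle `G` of length `n ≥ 3`, the binomial edge ideal `J_G` is prime if and
only if `n = 3`. -/
theorem binomialEdgeIdeal_cycleGraph_isPrime_iff (K : Type*) [Field K] {n : ℕ}
    (hn : 3 ≤ n) :
    (binomialEdgeIdeal K (SimpleGraph.cycleGraph n)).IsPrime ↔ n = 3 := by
  constructor
  · intro hp
    by_contra hne
    exact fwd K (by omega) hp
  · rintro rfl
    exact Cyc3.J_isPrime K
end
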